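/- Consider a location-family random utility model on m alternatives with measurable log-concave probability densities f_1,…,f_m on ℝ. Fix an integer 1 ≤ k ≤ m and an injective map π : {1,…,k} → {1,…,m} (a partial order report in which the k ranked alternatives are listed in order and all unmentioned alternatives are ranked below the lowest mentioned alternative in unspecified order). Define Pr(π|θ) = ∫_{B_π} ∏_{j=1}^m f_j(x_j − θ_j) dx, where B_π = {x ∈ ℝ^m : x_{π(1)} > x_{π(2)} > ⋯ > x_{π(k)} and x_{π(k)} > x_c for every c ∉ π({1,…,k})}. Then θ ↦ Pr(π|θ) is log-concave on ℝ^m: Pr(π | λθ+(1−λ)θ′) ≥ Pr(π|θ)^λ · Pr(π|θ′)^{1−λ} for all θ, θ′ ∈ ℝ^m and λ ∈ [0,1]. -/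

import Mathlib

open MeasureTheory Set Pointwise
open scoped ENNReal NNReal


lemma vol_image_add_right (K : Set ℝ) (b : ℝ) :
    volume ((fun x => x + b) '' K) = volume K := by
  have h : (fun x => x + b) '' K = (fun x => x + -b) ⁻¹' K := by
    ext z
    simp only [Set.mem_image, Set.mem_preimage]
    constructor
    · rintro ⟨x, hx, rfl⟩; simpa using hx
    · intro h; exact ⟨z + -b, h, by ring⟩
  rw [h, measure_preimage_add_right]

lemma vol_image_add_left (L : Set ℝ) (a : ℝ) :
    volume ((fun y => a + y) '' L) = volume L := by
  have h : (fun y => a + y) '' L = (fun y => -a + y) ⁻¹' L := by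
    ext z
    simp only [Set.mem_image, Set.mem_preimage]
    constructor
    · rintro ⟨y, hy, rfl⟩; simpa using hy
    · intro h; exact ⟨-a + z, h, by ring⟩
  rw [h, measure_preimage_add]

lemma compact_add_meas (K L : Set ℝ) (hK : IsCompact K) (hL : IsCompact L)
    (hKne : K.Nonempty) (hLne : L.Nonempty) :
    volume K + volume L ≤ volume (K + L) := by
  set a := sSup K with ha
  set b := sInf L with hb
  have haK : a ∈ K := hK.sSup_mem hKne
  have hbL : b ∈ L := hL.sInf_mem hLne
  set S : Set ℝ := (fun x => x + b) '' K with hS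
  set T : Set ℝ := (fun y => a + y) '' L with hTdef
  have hSsub : S ⊆ K + L := by
    rintro _ ⟨x, hx, rfl⟩; exact Set.add_mem_add hx hbL
  have hTsub : T ⊆ K + L := by
    rintro _ ⟨y, hy, rfl⟩; exact Set.add_mem_add haK hy
  have hT : MeasurableSet T :=
    ((Homeomorph.addLeft a).isCompact_image.2 hL).isClosed.measurableSet
  have hST : S ∩ T ⊆ {a + b} := by
    rintro z ⟨⟨x, hx, hxz⟩, ⟨y, hy, hyz⟩⟩
    simp only at hxz hyz
    have hxa : x ≤ a := le_csSup hK.bddAbove hx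
    have hby : b ≤ y := csInf_le hL.bddBelow hy
    have hx' : x = a := by nlinarith
    simp only [Set.mem_singleton_iff, ← hxz, hx']
  calc volume K + volume L = volume S + volume T := by
        rw [vol_image_add_right, vol_image_add_left]
    _ = volume (S ∪ T) + volume (S ∩ T) := (measure_union_add_inter S hT).symm
    _ = volume (S ∪ T) := by
        have : volume (S ∩ T) = 0 := measure_mono_null hST (by simp)
        rw [this, add_zero]
    _ ≤ volume (K + L) := measure_mono (Set.union_subset hSsub hTsub)

lemma half_left (A B L : Set ℝ) (hAne : A.Nonempty) (hLB : L ⊆ B) :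
    volume L ≤ volume (A + B) := by
  obtain ⟨a, ha⟩ := hAne
  calc volume L = volume ((fun y => a + y) '' L) := (vol_image_add_left L a).symm
    _ ≤ volume (A + B) := measure_mono (by
        rintro _ ⟨y, hy, rfl⟩; exact Set.add_mem_add ha (hLB hy))

lemma half_right (A B K : Set ℝ) (hBne : B.Nonempty) (hKA : K ⊆ A) :
    volume K ≤ volume (A + B) := by
  obtain ⟨b, hb⟩ := hBne
  calc volume K = volume ((fun x => x + b) '' K) := (vol_image_add_right K b).symm
    _ ≤ volume (A + B) := measure_mono (by
        rintro _ ⟨x, hx, rfl⟩; exact Set.add_mem_add (hKA hx) hb)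

lemma bm_one_dim (A B : Set ℝ) (hA : MeasurableSet A) (hB : MeasurableSet B)
    (hAne : A.Nonempty) (hBne : B.Nonempty) :
    volume A + volume B ≤ volume (A + B) := by
  rw [hA.measure_eq_iSup_isCompact, hB.measure_eq_iSup_isCompact]
  refine ENNReal.iSup_add_iSup_le fun K L => ?_
  by_cases hKA : K ⊆ A
  swap
  · rw [iSup_neg hKA, bot_eq_zero, zero_add]
    exact iSup_le fun hLB => iSup_le fun _ => half_left A B L hAne hLB
  by_cases hK : IsCompact K
  swap
  · rw [iSup_pos hKA, iSup_neg hK, bot_eq_zero, zero_add]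
    exact iSup_le fun hLB => iSup_le fun _ => half_left A B L hAne hLB
  by_cases hLB : L ⊆ B
  swap
  · rw [iSup_neg hLB, bot_eq_zero, add_zero, iSup_pos hKA, iSup_pos hK]
    exact half_right A B K hBne hKA
  by_cases hL : IsCompact L
  swap
  · rw [iSup_pos hLB, iSup_neg hL, bot_eq_zero, add_zero, iSup_pos hKA, iSup_pos hK]
    exact half_right A B K hBne hKA
  rw [iSup_pos hKA, iSup_pos hK, iSup_pos hLB, iSup_pos hL]
  rcases K.eq_empty_or_nonempty with rfl | hKne
  · simp only [measure_empty, zero_add]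
    exact half_left A B L hAne hLB
  rcases L.eq_empty_or_nonempty with rfl | hLne
  · simp only [measure_empty, add_zero]
    exact half_right A B K hBne hKA
  calc volume K + volume L ≤ volume (K + L) := compact_add_meas K L hK hL hKne hLne
    _ ≤ volume (A + B) := measure_mono (Set.add_subset_add hKA hLB)

lemma layercake_ennreal {α : Type*} [MeasurableSpace α] (μ : Measure α) [SigmaFinite μ]
    (F : α → ℝ≥0∞) (hF : Measurable F) :
    ∫⁻ x, F x ∂μ = ∫⁻ t in Ioi (0:ℝ), μ {x | ENNReal.ofReal t < F x} := by
  have key : ∀ x, F x = ∫⁻ t in Ioi (0:ℝ),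
      Set.indicator {t : ℝ | ENNReal.ofReal t < F x} (fun _ => (1:ℝ≥0∞)) t := by
    intro x
    have hmeas : MeasurableSet {t : ℝ | ENNReal.ofReal t < F x} :=
      (ENNReal.measurable_ofReal) measurableSet_Iio
    rw [lintegral_indicator hmeas, setLIntegral_one, Measure.restrict_apply hmeas]
    rcases eq_or_ne (F x) ⊤ with htop | htop
    · have : {t : ℝ | ENNReal.ofReal t < F x} ∩ Ioi 0 = Ioi 0 := by
        apply inter_eq_self_of_subset_right
        intro t _; simp [htop, ENNReal.ofReal_lt_top]
      rw [this, Real.volume_Ioi, htop]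
    · have : {t : ℝ | ENNReal.ofReal t < F x} ∩ Ioi 0 = Ioo 0 (F x).toReal := by
        ext t
        simp only [mem_inter_iff, mem_setOf_eq, mem_Ioi, mem_Ioo]
        constructor
        · rintro ⟨h1, h2⟩
          exact ⟨h2, (ENNReal.ofReal_lt_iff_lt_toReal h2.le htop).1 h1⟩
        · rintro ⟨h1, h2⟩
          exact ⟨(ENNReal.ofReal_lt_iff_lt_toReal h1.le htop).2 h2, h1⟩
      rw [this, Real.volume_Ioo, sub_zero, ENNReal.ofReal_toReal htop]
  have hset : MeasurableSet {p : α × ℝ | ENNReal.ofReal p.2 < F p.1} :=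
    measurableSet_lt (ENNReal.measurable_ofReal.comp measurable_snd) (hF.comp measurable_fst)
  calc ∫⁻ x, F x ∂μ
      = ∫⁻ x, (∫⁻ t in Ioi (0:ℝ),
          Set.indicator {t : ℝ | ENNReal.ofReal t < F x} (fun _ => (1:ℝ≥0∞)) t) ∂μ := by
        exact lintegral_congr key
    _ = ∫⁻ t in Ioi (0:ℝ), (∫⁻ x,
          Set.indicator {t : ℝ | ENNReal.ofReal t < F x} (fun _ => (1:ℝ≥0∞)) t ∂μ) := by
        apply lintegral_lintegral_swap
        apply Measurable.aemeasurable
        have : (Function.uncurry fun (x : α) (t : ℝ) =>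
            Set.indicator {t : ℝ | ENNReal.ofReal t < F x} (fun _ => (1:ℝ≥0∞)) t) =
            Set.indicator {p : α × ℝ | ENNReal.ofReal p.2 < F p.1} (fun _ => (1:ℝ≥0∞)) := by
          ext ⟨x, t⟩
          by_cases h : ENNReal.ofReal t < F x <;>
            simp [Function.uncurry, Set.indicator, h]
        rw [this]
        exact measurable_const.indicator hset
    _ = ∫⁻ t in Ioi (0:ℝ), μ {x | ENNReal.ofReal t < F x} := by
        refine lintegral_congr fun t => ?_
        have hrw : (fun x => Set.indicator {t' : ℝ | ENNReal.ofReal t' < F x}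
            (fun _ => (1:ℝ≥0∞)) t) =
            Set.indicator {x | ENNReal.ofReal t < F x} (fun _ => (1:ℝ≥0∞)) := by
          ext x; by_cases h : ENNReal.ofReal t < F x <;> simp [Set.indicator, h]
        have hm : MeasurableSet {x | ENNReal.ofReal t < F x} := hF measurableSet_Ioi
        rw [hrw, lintegral_indicator hm, setLIntegral_one]

lemma smul_set_measurable {c : ℝ} (hc : c ≠ 0) {A : Set ℝ} (hA : MeasurableSet A) :
    MeasurableSet (c • A) := by
  have : c • A = (fun x : ℝ => c⁻¹ * x) ⁻¹' A := by
    ext z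
    simp only [Set.mem_smul_set, Set.mem_preimage]
    constructor
    · rintro ⟨a, ha, rfl⟩; simpa [smul_eq_mul, inv_mul_cancel_left₀ hc] using ha
    · intro h; exact ⟨c⁻¹ * z, h, by rw [smul_eq_mul, mul_inv_cancel_left₀ hc]⟩
  rw [this]
  exact (measurable_const_mul _) hA

lemma vol_smul (c : ℝ) (hc : 0 ≤ c) (A : Set ℝ) :
    volume (c • A) = ENNReal.ofReal c * volume A := by
  have := MeasureTheory.Measure.addHaar_smul_of_nonneg (volume : Measure ℝ) hc A
  simpa using this

/-- Normalized 1-D Prékopa–Leindler core inequality. -/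
lemma pl_dim1_norm {lam : ℝ} (h0 : 0 < lam) (h1 : lam < 1) (F G H : ℝ → ℝ≥0∞)
    (hF : Measurable F) (hG : Measurable G) (hH : Measurable H)
    (hsupF : ⨆ x, F x = 1) (hsupG : ⨆ x, G x = 1)
    (hyp : ∀ x y, F x ^ lam * G y ^ (1 - lam) ≤ H (lam * x + (1 - lam) * y)) :
    ENNReal.ofReal lam * (∫⁻ x, F x) + ENNReal.ofReal (1 - lam) * (∫⁻ x, G x) ≤ ∫⁻ x, H x := by
  have hFle : ∀ x, F x ≤ 1 := fun x => hsupF ▸ le_iSup F x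
  have hGle : ∀ x, G x ≤ 1 := fun x => hsupG ▸ le_iSup G x
  -- level sets
  set A : ℝ → Set ℝ := fun t => {x | ENNReal.ofReal t < F x} with hA
  set B : ℝ → Set ℝ := fun t => {x | ENNReal.ofReal t < G x} with hB
  set C : ℝ → Set ℝ := fun t => {x | ENNReal.ofReal t < H x} with hC
  have hAm : ∀ t, MeasurableSet (A t) := fun t => hF measurableSet_Ioi
  have hBm : ∀ t, MeasurableSet (B t) := fun t => hG measurableSet_Ioi
  have hCm : ∀ t, MeasurableSet (C t) := fun t => hH measurableSet_Ioi
  -- key pointwise measure inequality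
  have key : ∀ t ∈ Ioo (0:ℝ) 1,
      ENNReal.ofReal lam * volume (A t) + ENNReal.ofReal (1 - lam) * volume (B t)
        ≤ volume (C t) := by
    intro t ht
    have htpos : (0:ℝ) < t := ht.1
    have htlt : t < 1 := ht.2
    have hoft : ENNReal.ofReal t < 1 := ENNReal.ofReal_lt_one.2 htlt
    have hAne : (A t).Nonempty := by
      obtain ⟨x, hx⟩ := lt_iSup_iff.1
        (show ENNReal.ofReal t < ⨆ x, F x by rw [hsupF]; exact hoft)
      exact ⟨x, hx⟩
    have hBne : (B t).Nonempty := by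
      obtain ⟨x, hx⟩ := lt_iSup_iff.1
        (show ENNReal.ofReal t < ⨆ x, G x by rw [hsupG]; exact hoft)
      exact ⟨x, hx⟩
    have hsub : lam • A t + (1 - lam) • B t ⊆ C t := by
      rintro _ ⟨_, ⟨x, hx, rfl⟩, _, ⟨y, hy, rfl⟩, rfl⟩
      have hxA : ENNReal.ofReal t < F x := hx
      have hyB : ENNReal.ofReal t < G y := hy
      have h0t : ENNReal.ofReal t ≠ 0 := by
        simp [ENNReal.ofReal_eq_zero, not_le, htpos]
      have htt : ENNReal.ofReal t ≠ ⊤ := ENNReal.ofReal_ne_top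
      show ENNReal.ofReal t < H (lam • x + (1 - lam) • y)
      have heq : ENNReal.ofReal t
          = ENNReal.ofReal t ^ lam * ENNReal.ofReal t ^ (1 - lam) := by
        rw [← ENNReal.rpow_add lam (1 - lam) h0t htt]
        norm_num
      calc ENNReal.ofReal t
          = ENNReal.ofReal t ^ lam * ENNReal.ofReal t ^ (1 - lam) := heq
        _ < F x ^ lam * ENNReal.ofReal t ^ (1 - lam) := by
            rw [ENNReal.mul_lt_mul_iff_left]
            · exact ENNReal.rpow_lt_rpow hxA h0
            · simp [ENNReal.rpow_eq_zero_iff, h0t, htt]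
            · simp [ENNReal.rpow_eq_top_iff, h0t, htt]
        _ ≤ F x ^ lam * G y ^ (1 - lam) :=
            mul_le_mul_right (ENNReal.rpow_le_rpow hyB.le (by linarith)) _
        _ ≤ H (lam * x + (1 - lam) * y) := hyp x y
        _ = H (lam • x + (1 - lam) • y) := by simp [smul_eq_mul]
    calc ENNReal.ofReal lam * volume (A t) + ENNReal.ofReal (1 - lam) * volume (B t)
        = volume (lam • A t) + volume ((1 - lam) • B t) := by
          rw [vol_smul lam h0.le, vol_smul (1 - lam) (by linarith)]
      _ ≤ volume (lam • A t + (1 - lam) • B t) :=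
          bm_one_dim _ _ (smul_set_measurable (ne_of_gt h0) (hAm t))
            (smul_set_measurable (by linarith : (1:ℝ) - lam ≠ 0) (hBm t))
            (hAne.smul_set) (hBne.smul_set)
      _ ≤ volume (C t) := measure_mono hsub
  -- integrate the pointwise inequality over t ∈ (0,1)
  have hAanti : Antitone fun t => volume (A t) := by
    intro s t hst
    exact measure_mono fun x hx => lt_of_le_of_lt (ENNReal.ofReal_le_ofReal hst) hx
  have hBanti : Antitone fun t => volume (B t) := by
    intro s t hst
    exact measure_mono fun x hx => lt_of_le_of_lt (ENNReal.ofReal_le_ofReal hst) hx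
  have hAmt : Measurable fun t => volume (A t) := hAanti.measurable
  have hBmt : Measurable fun t => volume (B t) := hBanti.measurable
  -- ∫ F over Ioi 0 equals over Ioo 0 1
  have hsplit : ∀ (F' : ℝ → ℝ≥0∞), Measurable F' → (∀ x, F' x ≤ 1) →
      ∫⁻ t in Ioi (0:ℝ), volume {x | ENNReal.ofReal t < F' x}
        = ∫⁻ t in Ioo (0:ℝ) 1, volume {x | ENNReal.ofReal t < F' x} := by
    intro F' hF' hle
    have hunion : Ioi (0:ℝ) = Ioo 0 1 ∪ Ici 1 := by
      ext t; simp only [mem_Ioi, mem_union, mem_Ioo, mem_Ici]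
      constructor
      · intro h; rcases lt_or_ge t 1 with h' | h'
        · exact Or.inl ⟨h, h'⟩
        · exact Or.inr h'
      · rintro (⟨h, _⟩ | h) <;> linarith
    rw [hunion, lintegral_union measurableSet_Ici (by
      rw [Set.disjoint_left]; rintro t ⟨_, h2⟩ h3; exact absurd h3 (not_le.2 h2))]
    have : ∫⁻ t in Ici (1:ℝ), volume {x | ENNReal.ofReal t < F' x} = 0 := by
      rw [setLIntegral_congr_fun measurableSet_Ici
        (fun t (ht : 1 ≤ t) => ?_), lintegral_zero]
      have : {x | ENNReal.ofReal t < F' x} = ∅ := by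
        ext x
        simp only [mem_setOf_eq, mem_empty_iff_false, iff_false, not_lt]
        calc F' x ≤ 1 := hle x
          _ = ENNReal.ofReal 1 := by simp
          _ ≤ ENNReal.ofReal t := ENNReal.ofReal_le_ofReal ht
      rw [this]; simp
    rw [this, add_zero]
  calc ENNReal.ofReal lam * (∫⁻ x, F x) + ENNReal.ofReal (1 - lam) * (∫⁻ x, G x)
      = ENNReal.ofReal lam * (∫⁻ t in Ioo (0:ℝ) 1, volume (A t))
        + ENNReal.ofReal (1 - lam) * (∫⁻ t in Ioo (0:ℝ) 1, volume (B t)) := by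
        rw [layercake_ennreal volume F hF, layercake_ennreal volume G hG,
          hsplit F hF hFle, hsplit G hG hGle]
    _ = ∫⁻ t in Ioo (0:ℝ) 1,
          (ENNReal.ofReal lam * volume (A t) + ENNReal.ofReal (1 - lam) * volume (B t)) := by
        rw [lintegral_add_left (by fun_prop), lintegral_const_mul _ hAmt,
          lintegral_const_mul _ hBmt]
    _ ≤ ∫⁻ t in Ioo (0:ℝ) 1, volume (C t) := by
        refine setLIntegral_mono' measurableSet_Ioo fun t ht => key t ht
    _ ≤ ∫⁻ t in Ioi (0:ℝ), volume (C t) :=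
        lintegral_mono_set (fun t ht => ht.1)
    _ = ∫⁻ x, H x := (layercake_ennreal volume H hH).symm

lemma geom_am {lam : ℝ} (h0 : 0 < lam) (h1 : lam < 1) (a b : ℝ≥0∞) :
    a ^ lam * b ^ (1 - lam) ≤ ENNReal.ofReal lam * a + ENNReal.ofReal (1 - lam) * b := by
  rcases eq_or_ne a ⊤ with rfl | ha
  · have hne : ENNReal.ofReal lam ≠ 0 := by
      simp only [ne_eq, ENNReal.ofReal_eq_zero, not_le]; linarith
    rw [ENNReal.mul_top hne, top_add]
    exact le_top
  rcases eq_or_ne b ⊤ with rfl | hb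
  · have hne : ENNReal.ofReal (1 - lam) ≠ 0 := by
      simp only [ne_eq, ENNReal.ofReal_eq_zero, not_le]; linarith
    rw [ENNReal.mul_top hne, add_top]
    exact le_top
  lift a to ℝ≥0 using ha
  lift b to ℝ≥0 using hb
  have key := NNReal.geom_mean_le_arith_mean2_weighted
    (Real.toNNReal lam) (Real.toNNReal (1 - lam)) a b
    (by
      rw [← Real.toNNReal_add h0.le (by linarith)]
      norm_num)
  have hlc : ((Real.toNNReal lam : ℝ≥0) : ℝ) = lam := Real.coe_toNNReal _ h0.le
  have hlc' : ((Real.toNNReal (1 - lam) : ℝ≥0) : ℝ) = 1 - lam :=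
    Real.coe_toNNReal _ (by linarith)
  rw [hlc, hlc'] at key
  calc (a : ℝ≥0∞) ^ lam * (b : ℝ≥0∞) ^ (1 - lam)
      = ((a ^ lam * b ^ (1 - lam) : ℝ≥0) : ℝ≥0∞) := by
        rw [ENNReal.coe_mul, ENNReal.coe_rpow_of_nonneg _ h0.le,
          ENNReal.coe_rpow_of_nonneg _ (by linarith : (0:ℝ) ≤ 1 - lam)]
    _ ≤ ((Real.toNNReal lam * a + Real.toNNReal (1 - lam) * b : ℝ≥0) : ℝ≥0∞) :=
        ENNReal.coe_le_coe.2 key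
    _ = ENNReal.ofReal lam * a + ENNReal.ofReal (1 - lam) * b := by
        rw [ENNReal.coe_add, ENNReal.coe_mul, ENNReal.coe_mul]
        rfl

lemma mono_iSup_mul {a b : ℕ → ℝ≥0∞} (ha : Monotone a) (hb : Monotone b) :
    (⨆ n, a n) * ⨆ n, b n = ⨆ n, a n * b n := by
  apply le_antisymm
  · rw [ENNReal.iSup_mul]
    refine iSup_le fun n => ?_
    rw [ENNReal.mul_iSup]
    refine iSup_le fun m => ?_
    calc a n * b m ≤ a (max n m) * b (max n m) :=
          mul_le_mul' (ha (le_max_left n m)) (hb (le_max_right n m))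
      _ ≤ ⨆ k, a k * b k := le_iSup (fun k => a k * b k) (max n m)
  · exact iSup_le fun n => mul_le_mul' (le_iSup a n) (le_iSup b n)

lemma iSup_rpow_of_mono {a : ℕ → ℝ≥0∞} (ha : Monotone a) {p : ℝ} (hp : 0 < p) :
    (⨆ n, a n) ^ p = ⨆ n, a n ^ p := by
  apply le_antisymm
  · have h : ∀ n, a n ≤ (⨆ m, a m ^ p) ^ (1 / p) := by
      intro n
      have : a n = (a n ^ p) ^ (1 / p) := by
        rw [← ENNReal.rpow_mul, mul_one_div_cancel (ne_of_gt hp), ENNReal.rpow_one]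
      rw [this]
      exact ENNReal.rpow_le_rpow (le_iSup (fun m => a m ^ p) n) (by positivity)
    have : (⨆ n, a n) ≤ (⨆ m, a m ^ p) ^ (1 / p) := iSup_le h
    calc (⨆ n, a n) ^ p ≤ ((⨆ m, a m ^ p) ^ (1 / p)) ^ p :=
          ENNReal.rpow_le_rpow this hp.le
      _ = ⨆ m, a m ^ p := by
          rw [← ENNReal.rpow_mul, one_div_mul_cancel (ne_of_gt hp), ENNReal.rpow_one]
  · exact iSup_le fun n => ENNReal.rpow_le_rpow (le_iSup a n) hp.le

/-- 1-D Prékopa–Leindler, general (ENNReal-valued) version. -/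
lemma pl_dim1 {lam : ℝ} (h0 : 0 < lam) (h1 : lam < 1) (F G H : ℝ → ℝ≥0∞)
    (hF : Measurable F) (hG : Measurable G) (hH : Measurable H)
    (hyp : ∀ x y, F x ^ lam * G y ^ (1 - lam) ≤ H (lam * x + (1 - lam) * y)) :
    (∫⁻ x, F x) ^ lam * (∫⁻ x, G x) ^ (1 - lam) ≤ ∫⁻ x, H x := by
  -- step 1: reduce to bounded F, G
  have bounded : ∀ (F' G' : ℝ → ℝ≥0∞), Measurable F' → Measurable G' →
      (∀ x, F' x ≤ F x) → (∀ x, G' x ≤ G x) →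
      (⨆ x, F' x) ≠ ⊤ → (⨆ x, G' x) ≠ ⊤ →
      (∫⁻ x, F' x) ^ lam * (∫⁻ x, G' x) ^ (1 - lam) ≤ ∫⁻ x, H x := by
    intro F' G' hF' hG' hFle hGle hFtop hGtop
    set MF := ⨆ x, F' x with hMF
    set MG := ⨆ x, G' x with hMG
    rcases eq_or_ne MF 0 with hMF0 | hMF0
    · have : ∀ x, F' x = 0 := fun x => le_antisymm (hMF0 ▸ le_iSup F' x) zero_le
      have : (∫⁻ x, F' x) = 0 := by simp [this]
      rw [this, ENNReal.zero_rpow_of_pos h0, zero_mul]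
      exact zero_le
    rcases eq_or_ne MG 0 with hMG0 | hMG0
    · have : ∀ x, G' x = 0 := fun x => le_antisymm (hMG0 ▸ le_iSup G' x) zero_le
      have : (∫⁻ x, G' x) = 0 := by simp [this]
      rw [this, ENNReal.zero_rpow_of_pos (by linarith), mul_zero]
      exact zero_le
    -- normalize
    have h1lam : (0:ℝ) < 1 - lam := by linarith
    have hMFl0 : MF ^ lam ≠ 0 := (ENNReal.rpow_pos (pos_iff_ne_zero.2 hMF0) hFtop).ne'
    have hMFlt : MF ^ lam ≠ ⊤ := ENNReal.rpow_ne_top_of_nonneg h0.le hFtop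
    have hMGl0 : MG ^ (1 - lam) ≠ 0 := (ENNReal.rpow_pos (pos_iff_ne_zero.2 hMG0) hGtop).ne'
    have hMGlt : MG ^ (1 - lam) ≠ ⊤ := ENNReal.rpow_ne_top_of_nonneg h1lam.le hGtop
    set C := MF ^ lam * MG ^ (1 - lam) with hCdef
    have hCne0 : C ≠ 0 := mul_ne_zero hMFl0 hMGl0
    have hCnetop : C ≠ ⊤ := ENNReal.mul_ne_top hMFlt hMGlt
    have hCinv : (MF ^ lam)⁻¹ * (MG ^ (1 - lam))⁻¹ = C⁻¹ :=
      (ENNReal.mul_inv (Or.inl hMFl0) (Or.inl hMFlt)).symm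
    set F2 : ℝ → ℝ≥0∞ := fun x => F' x * MF⁻¹ with hF2
    set G2 : ℝ → ℝ≥0∞ := fun x => G' x * MG⁻¹ with hG2
    set H2 : ℝ → ℝ≥0∞ := fun x => H x * C⁻¹ with hH2
    have hsupF2 : ⨆ x, F2 x = 1 := by
      rw [hF2]
      simp only [← ENNReal.iSup_mul]
      exact ENNReal.mul_inv_cancel hMF0 hFtop
    have hsupG2 : ⨆ x, G2 x = 1 := by
      rw [hG2]
      simp only [← ENNReal.iSup_mul]
      exact ENNReal.mul_inv_cancel hMG0 hGtop
    have hprod : ∀ x y, F2 x ^ lam * G2 y ^ (1 - lam)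
        = F' x ^ lam * G' y ^ (1 - lam) * C⁻¹ := by
      intro x y
      rw [hF2, hG2]
      simp only
      rw [ENNReal.mul_rpow_of_nonneg _ _ h0.le, ENNReal.mul_rpow_of_nonneg _ _ h1lam.le,
        ENNReal.inv_rpow, ENNReal.inv_rpow]
      calc F' x ^ lam * (MF ^ lam)⁻¹ * (G' y ^ (1 - lam) * (MG ^ (1 - lam))⁻¹)
          = F' x ^ lam * G' y ^ (1 - lam) * ((MF ^ lam)⁻¹ * (MG ^ (1 - lam))⁻¹) := by ring
        _ = F' x ^ lam * G' y ^ (1 - lam) * C⁻¹ := by rw [hCinv]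
    have hyp2 : ∀ x y, F2 x ^ lam * G2 y ^ (1 - lam) ≤ H2 (lam * x + (1 - lam) * y) := by
      intro x y
      rw [hprod, hH2]
      refine mul_le_mul_left ?_ _
      calc F' x ^ lam * G' y ^ (1 - lam)
          ≤ F x ^ lam * G y ^ (1 - lam) :=
            mul_le_mul' (ENNReal.rpow_le_rpow (hFle x) h0.le)
              (ENNReal.rpow_le_rpow (hGle y) h1lam.le)
        _ ≤ H (lam * x + (1 - lam) * y) := hyp x y
    have main := pl_dim1_norm h0 h1 F2 G2 H2
      (hF'.mul_const _) (hG'.mul_const _) (hH.mul_const _) hsupF2 hsupG2 hyp2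
    have hiF2 : (∫⁻ x, F2 x) = (∫⁻ x, F' x) * MF⁻¹ := lintegral_mul_const _ hF'
    have hiG2 : (∫⁻ x, G2 x) = (∫⁻ x, G' x) * MG⁻¹ := lintegral_mul_const _ hG'
    have hiH2 : (∫⁻ x, H2 x) = (∫⁻ x, H x) * C⁻¹ := lintegral_mul_const _ hH
    have step : (∫⁻ x, F' x) ^ lam * (∫⁻ x, G' x) ^ (1 - lam) * C⁻¹
        ≤ (∫⁻ x, H x) * C⁻¹ := by
      calc (∫⁻ x, F' x) ^ lam * (∫⁻ x, G' x) ^ (1 - lam) * C⁻¹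
          = ((∫⁻ x, F' x) * MF⁻¹) ^ lam * ((∫⁻ x, G' x) * MG⁻¹) ^ (1 - lam) := by
            rw [ENNReal.mul_rpow_of_nonneg _ _ h0.le,
              ENNReal.mul_rpow_of_nonneg _ _ h1lam.le,
              ENNReal.inv_rpow, ENNReal.inv_rpow]
            rw [← hCinv]; ring
        _ = (∫⁻ x, F2 x) ^ lam * (∫⁻ x, G2 x) ^ (1 - lam) := by rw [hiF2, hiG2]
        _ ≤ ENNReal.ofReal lam * (∫⁻ x, F2 x) + ENNReal.ofReal (1 - lam) * ∫⁻ x, G2 x :=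
            geom_am h0 h1 _ _
        _ ≤ ∫⁻ x, H2 x := main
        _ = (∫⁻ x, H x) * C⁻¹ := hiH2
    have hCinv0 : C⁻¹ ≠ 0 := ENNReal.inv_ne_zero.2 hCnetop
    have hCinvt : C⁻¹ ≠ ⊤ := ENNReal.inv_ne_top.2 hCne0
    exact (ENNReal.mul_le_mul_iff_left hCinv0 hCinvt).1 step
  -- step 2: truncation
  set Fn : ℕ → ℝ → ℝ≥0∞ := fun n x => min (F x) n with hFn
  set Gn : ℕ → ℝ → ℝ≥0∞ := fun n x => min (G x) n with hGn
  have hFnm : ∀ n, Measurable (Fn n) := fun n => hF.min measurable_const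
  have hGnm : ∀ n, Measurable (Gn n) := fun n => hG.min measurable_const
  have hFnmono : Monotone Fn := fun n m hnm x =>
    min_le_min le_rfl (by exact_mod_cast Nat.cast_le.2 hnm)
  have hGnmono : Monotone Gn := fun n m hnm x =>
    min_le_min le_rfl (by exact_mod_cast Nat.cast_le.2 hnm)
  have hFsup : ∀ x, (⨆ n, Fn n x) = F x := by
    intro x
    rw [hFn]
    simp only [min_comm (F x)]
    rw [show ∀ (a : ℕ → ℝ≥0∞) (b : ℝ≥0∞), (⨆ n, min (a n) b) = min (⨆ n, a n) b from ?_]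
    · rw [ENNReal.iSup_natCast]
      simp [min_comm]
    · intro a b
      exact (iSup_inf_eq a b).symm
  have hGsup : ∀ x, (⨆ n, Gn n x) = G x := by
    intro x
    rw [hGn]
    simp only [min_comm (G x)]
    rw [show ∀ (a : ℕ → ℝ≥0∞) (b : ℝ≥0∞), (⨆ n, min (a n) b) = min (⨆ n, a n) b from ?_]
    · rw [ENNReal.iSup_natCast]
      simp [min_comm]
    · intro a b
      exact (iSup_inf_eq a b).symm
  have hiF : (∫⁻ x, F x) = ⨆ n, ∫⁻ x, Fn n x := by
    rw [← lintegral_iSup hFnm (fun n m hnm => hFnmono hnm)]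
    exact lintegral_congr fun x => (hFsup x).symm
  have hiG : (∫⁻ x, G x) = ⨆ n, ∫⁻ x, Gn n x := by
    rw [← lintegral_iSup hGnm (fun n m hnm => hGnmono hnm)]
    exact lintegral_congr fun x => (hGsup x).symm
  have hper : ∀ n, (∫⁻ x, Fn n x) ^ lam * (∫⁻ x, Gn n x) ^ (1 - lam) ≤ ∫⁻ x, H x := by
    intro n
    refine bounded (Fn n) (Gn n) (hFnm n) (hGnm n)
      (fun x => min_le_left _ _) (fun x => min_le_left _ _) ?_ ?_
    · exact ne_top_of_le_ne_top (ENNReal.natCast_ne_top n)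
        (iSup_le fun x => min_le_right _ _)
    · exact ne_top_of_le_ne_top (ENNReal.natCast_ne_top n)
        (iSup_le fun x => min_le_right _ _)
  have haMono : Monotone fun n => ∫⁻ x, Fn n x :=
    fun n m hnm => lintegral_mono fun x => hFnmono hnm x
  have hbMono : Monotone fun n => ∫⁻ x, Gn n x :=
    fun n m hnm => lintegral_mono fun x => hGnmono hnm x
  calc (∫⁻ x, F x) ^ lam * (∫⁻ x, G x) ^ (1 - lam)
      = (⨆ n, ∫⁻ x, Fn n x) ^ lam * (⨆ n, ∫⁻ x, Gn n x) ^ (1 - lam) := by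
        rw [hiF, hiG]
    _ = (⨆ n, (∫⁻ x, Fn n x) ^ lam) * ⨆ n, (∫⁻ x, Gn n x) ^ (1 - lam) := by
        rw [iSup_rpow_of_mono haMono h0, iSup_rpow_of_mono hbMono (by linarith)]
    _ = ⨆ n, (∫⁻ x, Fn n x) ^ lam * (∫⁻ x, Gn n x) ^ (1 - lam) :=
        mono_iSup_mul (fun n m hnm => ENNReal.rpow_le_rpow (haMono hnm) h0.le)
          (fun n m hnm => ENNReal.rpow_le_rpow (hbMono hnm) (by linarith))
    _ ≤ ∫⁻ x, H x := iSup_le hper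

lemma insertNth_linear {n : ℕ} (i : Fin (n + 1)) (c d x y : ℝ) (z w : Fin n → ℝ) :
    Fin.insertNth (α := fun _ => ℝ) i (c * x + d * y)
        ((c • z + d • w : Fin n → ℝ))
      = c • Fin.insertNth (α := fun _ => ℝ) i x z
        + d • Fin.insertNth (α := fun _ => ℝ) i y w := by
  funext j
  refine Fin.succAboveCases i ?_ ?_ j
  · simp [Fin.insertNth_apply_same]
  · intro j
    simp [Fin.insertNth_apply_succAbove]

/-- Prékopa–Leindler inequality on `Fin n → ℝ` (ENNReal-valued form). -/
lemma pl_pi : ∀ (n : ℕ) {lam : ℝ}, 0 < lam → lam < 1 →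
    ∀ (F G H : (Fin n → ℝ) → ℝ≥0∞), Measurable F → Measurable G → Measurable H →
    (∀ x y, F x ^ lam * G y ^ (1 - lam) ≤ H (lam • x + (1 - lam) • y)) →
    (∫⁻ x, F x) ^ lam * (∫⁻ x, G x) ^ (1 - lam) ≤ ∫⁻ x, H x := by
  intro n
  induction n with
  | zero =>
    intro lam h0 h1 F G H hF hG hH hyp
    have hvol : (volume : Measure (Fin 0 → ℝ)) Set.univ = 1 := by
      rw [MeasureTheory.volume_pi, Measure.pi_univ]
      simp
    set z : Fin 0 → ℝ := fun _ => 0 with hz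
    have hc : ∀ (K : (Fin 0 → ℝ) → ℝ≥0∞), (∫⁻ x, K x) = K z := by
      intro K
      rw [lintegral_congr (fun x => congrArg K (Subsingleton.elim x z)),
        lintegral_const, hvol, mul_one]
    rw [hc F, hc G, hc H]
    have := hyp z z
    rwa [show lam • z + (1 - lam) • z = z from Subsingleton.elim _ _] at this
  | succ n IH =>
    intro lam h0 h1 F G H hF hG hH hyp
    have h1lam : (0:ℝ) < 1 - lam := by linarith
    set e := MeasurableEquiv.piFinSuccAbove (fun _ : Fin (n+1) => ℝ) 0 with he
    have mp : MeasurePreserving e volume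
        ((volume : Measure ℝ).prod (Measure.pi fun _ : Fin n => volume)) :=
      measurePreserving_piFinSuccAbove (fun _ => volume) 0
    have hpi : (Measure.pi fun _ : Fin n => volume) = (volume : Measure (Fin n → ℝ)) :=
      (MeasureTheory.volume_pi).symm
    have mp' : MeasurePreserving e volume
        ((volume : Measure ℝ).prod (volume : Measure (Fin n → ℝ))) := by
      rwa [hpi] at mp
    set F2 : ℝ × (Fin n → ℝ) → ℝ≥0∞ := fun p => F (e.symm p) with hF2def
    set G2 : ℝ × (Fin n → ℝ) → ℝ≥0∞ := fun p => G (e.symm p) with hG2def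
    set H2 : ℝ × (Fin n → ℝ) → ℝ≥0∞ := fun p => H (e.symm p) with hH2def
    have hF2 : Measurable F2 := hF.comp e.symm.measurable
    have hG2 : Measurable G2 := hG.comp e.symm.measurable
    have hH2 : Measurable H2 := hH.comp e.symm.measurable
    have hsymm_lin : ∀ (c d : ℝ) (p q : ℝ × (Fin n → ℝ)),
        e.symm (c • p + d • q) = c • e.symm p + d • e.symm q := by
      intro c d p q
      show Fin.insertNth (α := fun _ => ℝ) 0 (c • p + d • q).1 (c • p + d • q).2 = _
      have h1' : (c • p + d • q).1 = c * p.1 + d * q.1 := rfl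
      have h2' : (c • p + d • q).2 = (c • p.2 + d • q.2 : Fin n → ℝ) := rfl
      rw [h1', h2', insertNth_linear]
      rfl
    have hyp2 : ∀ p q, F2 p ^ lam * G2 q ^ (1 - lam) ≤ H2 (lam • p + (1 - lam) • q) := by
      intro p q
      have := hyp (e.symm p) (e.symm q)
      rwa [← hsymm_lin lam (1 - lam) p q] at this
    -- marginals
    set F1 : ℝ → ℝ≥0∞ := fun x => ∫⁻ z, F2 (x, z) with hF1def
    set G1 : ℝ → ℝ≥0∞ := fun x => ∫⁻ z, G2 (x, z) with hG1def
    set H1 : ℝ → ℝ≥0∞ := fun x => ∫⁻ z, H2 (x, z) with hH1def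
    have hF1 : Measurable F1 := hF2.lintegral_prod_right'
    have hG1 : Measurable G1 := hG2.lintegral_prod_right'
    have hH1 : Measurable H1 := hH2.lintegral_prod_right'
    have hyp1 : ∀ x y, F1 x ^ lam * G1 y ^ (1 - lam) ≤ H1 (lam * x + (1 - lam) * y) := by
      intro x y
      refine IH h0 h1 (fun z => F2 (x, z)) (fun w => G2 (y, w))
        (fun z => H2 (lam * x + (1 - lam) * y, z))
        (hF2.comp measurable_prodMk_left) (hG2.comp measurable_prodMk_left)
        (hH2.comp measurable_prodMk_left) ?_
      intro z w
      have := hyp2 (x, z) (y, w)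
      have hpq : lam • ((x, z) : ℝ × (Fin n → ℝ)) + (1 - lam) • ((y, w) : ℝ × (Fin n → ℝ))
          = (lam * x + (1 - lam) * y, lam • z + (1 - lam) • w) := rfl
      rwa [hpq] at this
    have key := pl_dim1 h0 h1 F1 G1 H1 hF1 hG1 hH1 hyp1
    have trans : ∀ (K : (Fin (n+1) → ℝ) → ℝ≥0∞) (K2 : ℝ × (Fin n → ℝ) → ℝ≥0∞),
        Measurable K2 → (∀ p, K2 p = K (e.symm p)) →
        (∫⁻ x, K x) = ∫⁻ x, (∫⁻ z, K2 (x, z)) := by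
      intro K K2 hK2 hKe
      calc (∫⁻ x, K x) = ∫⁻ a, K2 (e a) := by
            refine lintegral_congr fun a => ?_
            rw [hKe (e a), e.symm_apply_apply]
        _ = ∫⁻ p, K2 p ∂((volume : Measure ℝ).prod volume) := mp'.lintegral_comp hK2
        _ = ∫⁻ x, (∫⁻ z, K2 (x, z)) := lintegral_prod _ hK2.aemeasurable
    rw [trans F F2 hF2 (fun _ => rfl), trans G G2 hG2 (fun _ => rfl),
      trans H H2 hH2 (fun _ => rfl)]
    exact key

/-- The probability of a partial-order report in a location-family random utility
model: the `k` alternatives `π 1, …, π k` are ranked in that order, and every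
unmentioned alternative is ranked below the lowest mentioned one, `π k`. -/
noncomputable def rumProbPartial {m k : ℕ} (hk : 1 ≤ k) (f : Fin m → ℝ → ℝ)
    (θ : Fin m → ℝ) (π : Fin k → Fin m) : ℝ :=
  ∫ x in {x : Fin m → ℝ |
      (∀ r s : Fin k, r < s → x (π s) < x (π r)) ∧
      (∀ c : Fin m, c ∉ Set.range π → x c < x (π ⟨k - 1, by omega⟩))},
    ∏ j, f j (x j - θ j)

theorem stmt1 (m k : ℕ) (hk : 1 ≤ k) (hkm : k ≤ m) (f : Fin m → ℝ → ℝ)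
    (hmeas : ∀ j, Measurable (f j))
    (hnonneg : ∀ j x, 0 ≤ f j x)
    (hint : ∀ j, ∫ x, f j x = 1)
    (hlogconcave : ∀ j (x y lam : ℝ), 0 ≤ lam → lam ≤ 1 →
      f j x ^ lam * f j y ^ (1 - lam) ≤ f j (lam * x + (1 - lam) * y))
    (π : Fin k → Fin m) (hπ : Function.Injective π)
    (θ θ' : Fin m → ℝ) (lam : ℝ) (h0 : 0 ≤ lam) (h1 : lam ≤ 1) :
    rumProbPartial hk f θ π ^ lam * rumProbPartial hk f θ' π ^ (1 - lam) ≤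
      rumProbPartial hk f (lam • θ + (1 - lam) • θ') π := by
  -- dispose of the endpoint cases
  rcases eq_or_lt_of_le h0 with rfl | h0'
  · simp only [Real.rpow_zero, sub_zero, Real.rpow_one, one_mul, zero_smul, one_smul,
      zero_add]
    exact le_rfl
  rcases eq_or_lt_of_le h1 with rfl | h1'
  · simp only [Real.rpow_one, sub_self, Real.rpow_zero, mul_one, one_smul, zero_smul,
      add_zero]
    exact le_rfl
  -- notation
  set S : Set (Fin m → ℝ) := {x : Fin m → ℝ |
      (∀ r s : Fin k, r < s → x (π s) < x (π r)) ∧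
      (∀ c : Fin m, c ∉ Set.range π → x c < x (π ⟨k - 1, by omega⟩))} with hSdef
  have hrep : ∀ ϑ : Fin m → ℝ,
      rumProbPartial hk f ϑ π = ∫ x in S, ∏ j, f j (x j - ϑ j) := fun _ => rfl
  have hSmeas : MeasurableSet S := by
    have : S = (⋂ r, ⋂ s, ⋂ (_ : r < s), {x : Fin m → ℝ | x (π s) < x (π r)})
        ∩ (⋂ c, ⋂ (_ : c ∉ Set.range π),
            {x : Fin m → ℝ | x c < x (π ⟨k - 1, by omega⟩)}) := by
      ext x
      simp only [hSdef, Set.mem_setOf_eq, Set.mem_inter_iff, Set.mem_iInter]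
    rw [this]
    exact MeasurableSet.inter
      (MeasurableSet.iInter fun r => MeasurableSet.iInter fun s =>
        MeasurableSet.iInter fun _ =>
          measurableSet_lt (measurable_pi_apply _) (measurable_pi_apply _))
      (MeasurableSet.iInter fun c => MeasurableSet.iInter fun _ =>
        measurableSet_lt (measurable_pi_apply _) (measurable_pi_apply _))
  -- convexity of S (for strictly interior lam)
  have hSconv : ∀ x ∈ S, ∀ y ∈ S, lam • x + (1 - lam) • y ∈ S := by
    intro x hx y hy
    have h1l : (0:ℝ) < 1 - lam := by linarith
    constructor
    · intro r s hrs
      have hxs := hx.1 r s hrs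
      have hys := hy.1 r s hrs
      simp only [Pi.add_apply, Pi.smul_apply, smul_eq_mul]
      nlinarith
    · intro c hc
      have hxs := hx.2 c hc
      have hys := hy.2 c hc
      simp only [Pi.add_apply, Pi.smul_apply, smul_eq_mul]
      nlinarith
  -- integrability of the shifted product densities
  have hfint : ∀ j, Integrable (f j) := by
    intro j
    by_contra hni
    have := hint j
    rw [integral_undef hni] at this
    exact one_ne_zero this.symm
  have hgmeas : ∀ ϑ : Fin m → ℝ, Measurable fun x : Fin m → ℝ => ∏ j, f j (x j - ϑ j) := by
    intro ϑ
    exact Finset.measurable_prod _ fun j _ =>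
      (hmeas j).comp ((measurable_pi_apply j).sub measurable_const)
  have hgint : ∀ ϑ : Fin m → ℝ, Integrable fun x : Fin m → ℝ => ∏ j, f j (x j - ϑ j) := by
    intro ϑ
    exact Integrable.fin_nat_prod fun j => (hfint j).comp_sub_right (ϑ j)
  have hgnn : ∀ (ϑ : Fin m → ℝ) (x : Fin m → ℝ), 0 ≤ ∏ j, f j (x j - ϑ j) := by
    intro ϑ x
    exact Finset.prod_nonneg fun j _ => hnonneg j _
  -- lintegral representation
  set L : (Fin m → ℝ) → ℝ≥0∞ := fun ϑ =>
    ∫⁻ x, S.indicator (fun x => ENNReal.ofReal (∏ j, f j (x j - ϑ j))) x with hLdef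
  have hLrep : ∀ ϑ, rumProbPartial hk f ϑ π = (L ϑ).toReal := by
    intro ϑ
    rw [hrep ϑ, hLdef]
    simp only
    rw [lintegral_indicator hSmeas]
    rw [integral_eq_lintegral_of_nonneg_ae (ae_of_all _ fun x => hgnn ϑ x)
      ((hgmeas ϑ).aestronglyMeasurable.restrict)]
  have hLfin : ∀ ϑ, L ϑ ≠ ⊤ := by
    intro ϑ
    have hle : L ϑ ≤ ∫⁻ x : Fin m → ℝ, ENNReal.ofReal (∏ j, f j (x j - ϑ j)) :=
      lintegral_mono fun x => Set.indicator_le_self _ _ x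
    have heq : (∫⁻ x : Fin m → ℝ, ENNReal.ofReal (∏ j, f j (x j - ϑ j)))
        = ENNReal.ofReal (∫ x : Fin m → ℝ, ∏ j, f j (x j - ϑ j)) :=
      (ofReal_integral_eq_lintegral_ofReal (hgint ϑ) (ae_of_all _ fun x => hgnn ϑ x)).symm
    exact ne_top_of_le_ne_top (heq ▸ ENNReal.ofReal_ne_top) hle
  -- pointwise Prékopa–Leindler hypothesis
  set ϑ'' : Fin m → ℝ := lam • θ + (1 - lam) • θ' with hϑ''
  have hyp : ∀ x y : Fin m → ℝ,
      (S.indicator (fun x => ENNReal.ofReal (∏ j, f j (x j - θ j))) x) ^ lam *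
        (S.indicator (fun x => ENNReal.ofReal (∏ j, f j (x j - θ' j))) y) ^ (1 - lam) ≤
      S.indicator (fun x => ENNReal.ofReal (∏ j, f j (x j - ϑ'' j)))
        (lam • x + (1 - lam) • y) := by
    intro x y
    by_cases hx : x ∈ S
    swap
    · rw [Set.indicator_of_notMem hx, ENNReal.zero_rpow_of_pos h0', zero_mul]
      exact zero_le
    by_cases hy : y ∈ S
    swap
    · rw [Set.indicator_of_notMem hy, ENNReal.zero_rpow_of_pos (by linarith), mul_zero]
      exact zero_le
    have hz : lam • x + (1 - lam) • y ∈ S := hSconv x hx y hy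
    rw [Set.indicator_of_mem hx, Set.indicator_of_mem hy, Set.indicator_of_mem hz]
    rw [ENNReal.ofReal_rpow_of_nonneg (hgnn θ x) h0,
      ENNReal.ofReal_rpow_of_nonneg (hgnn θ' y) (by linarith),
      ← ENNReal.ofReal_mul (Real.rpow_nonneg (hgnn θ x) lam)]
    apply ENNReal.ofReal_le_ofReal
    calc (∏ j, f j (x j - θ j)) ^ lam * (∏ j, f j (y j - θ' j)) ^ (1 - lam)
        = ∏ j, f j (x j - θ j) ^ lam * f j (y j - θ' j) ^ (1 - lam) := by
          rw [← Real.finset_prod_rpow _ _ (fun j _ => hnonneg j _) lam,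
            ← Real.finset_prod_rpow _ _ (fun j _ => hnonneg j _) (1 - lam),
            ← Finset.prod_mul_distrib]
      _ ≤ ∏ j, f j ((lam • x + (1 - lam) • y) j - ϑ'' j) := by
          refine Finset.prod_le_prod (fun j _ => mul_nonneg
            (Real.rpow_nonneg (hnonneg j _) _) (Real.rpow_nonneg (hnonneg j _) _))
            fun j _ => ?_
          have := hlogconcave j (x j - θ j) (y j - θ' j) lam h0 h1
          have harg : lam * (x j - θ j) + (1 - lam) * (y j - θ' j)
              = (lam • x + (1 - lam) • y) j - ϑ'' j := by
            simp only [hϑ'', Pi.add_apply, Pi.smul_apply, smul_eq_mul]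
            ring
          rwa [harg] at this
  -- apply Prékopa–Leindler
  have key := pl_pi m h0' h1'
    (S.indicator fun x => ENNReal.ofReal (∏ j, f j (x j - θ j)))
    (S.indicator fun x => ENNReal.ofReal (∏ j, f j (x j - θ' j)))
    (S.indicator fun x => ENNReal.ofReal (∏ j, f j (x j - ϑ'' j)))
    ((ENNReal.measurable_ofReal.comp (hgmeas θ)).indicator hSmeas)
    ((ENNReal.measurable_ofReal.comp (hgmeas θ')).indicator hSmeas)
    ((ENNReal.measurable_ofReal.comp (hgmeas ϑ'')).indicator hSmeas)
    hyp
  -- convert back to real integrals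
  rw [hLrep θ, hLrep θ', hLrep ϑ'']
  rw [ENNReal.toReal_rpow, ENNReal.toReal_rpow, ← ENNReal.toReal_mul]
  exact ENNReal.toReal_mono (hLfin ϑ'') key
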